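/- arXiv:1201.5152 — 2 statements merged into one kernel-verified Lean document; each statement's English description precedes it below -/
import Mathlib

section
/- For α > 0, the operator G_ε(h)(u,τ) = ∫_{-∞}^0 h(u+t, τ + t/ε) dt, applied to a continuous function h : {Re u < -ρ} × 𝕋 → ℂ satisfying |h(u,τ)| ≤ C e^{α Re u}, is well defined, satisfies |G_ε(h)(u,τ)| ≤ (C/α) e^{α Re u}, and is a right inverse of L_ε = ε⁻¹∂_τ + ∂_u, i.e., L_ε(G_ε(h)) = h whenever h is C¹. -/
open MeasureTheory

open Set in
/-- For `α > 0`, the operator `G_ε(h)(u,τ) = ∫_{-∞}^0 h(u+t, τ+t/ε) dt` applied to a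
continuous `2π`-periodic (in `τ`) function bounded by `C e^{α Re u}` on `{Re u < -ρ}`
is well defined, satisfies `|G_ε(h)| ≤ (C/α) e^{α Re u}`, and is a right inverse of
`L_ε = ε⁻¹ ∂_τ + ∂_u`. -/
theorem right_inverse_G_eps
    (α ρ C ε : ℝ) (hα : 0 < α) (hε : 0 < ε)
    (h : ℂ → ℝ → ℂ)
    (hC1 : ContDiff ℝ 1 (fun p : ℂ × ℝ => h p.1 p.2))
    (hper : ∀ (u : ℂ) (τ : ℝ), h u (τ + 2 * Real.pi) = h u τ)
    (hbound : ∀ (u : ℂ) (τ : ℝ), u.re < -ρ → ‖h u τ‖ ≤ C * Real.exp (α * u.re))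
    (G : ℂ → ℝ → ℂ)
    (hG : ∀ (u : ℂ) (τ : ℝ), G u τ = ∫ t in Set.Iic (0 : ℝ), h (u + (t : ℂ)) (τ + t / ε)) :
    ∀ (u : ℂ) (τ : ℝ), u.re < -ρ →
      IntegrableOn (fun t : ℝ => h (u + (t : ℂ)) (τ + t / ε)) (Set.Iic 0) ∧
      ‖G u τ‖ ≤ C / α * Real.exp (α * u.re) ∧
      ∀ D : ℂ × ℝ →L[ℝ] ℂ,
        HasFDerivAt (fun p : ℂ × ℝ => G p.1 p.2) D (u, τ) →
        D (1, ε⁻¹) = h u τ := by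
  -- exp (α t) is integrable on every Iic s
  have hexpInt : ∀ s : ℝ, IntegrableOn (fun t : ℝ => Real.exp (α * t)) (Set.Iic s) := by
    intro s
    have h1 : IntegrableOn (fun x : ℝ => Real.exp (-α * x)) (Set.Ioi (-s)) :=
      exp_neg_integrableOn_Ioi (-s) hα
    have hemb : MeasurableEmbedding fun x : ℝ => -x :=
      (Homeomorph.neg ℝ).isClosedEmbedding.measurableEmbedding
    have h3 : (fun x : ℝ => -x) ⁻¹' Set.Iic s = Set.Ici (-s) := by
      ext x; simp [neg_le]
    have h5 : IntegrableOn ((fun t : ℝ => Real.exp (α * t)) ∘ fun x : ℝ => -x)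
        ((fun x : ℝ => -x) ⁻¹' Set.Iic s) := by
      rw [h3]
      have h4 : ((fun t : ℝ => Real.exp (α * t)) ∘ fun x : ℝ => -x)
          = fun x : ℝ => Real.exp (-α * x) := by
        funext x; simp [Function.comp, mul_neg, neg_mul]
      rw [h4]
      exact (integrableOn_Ici_iff_integrableOn_Ioi).mpr h1
    exact (MeasurePreserving.integrableOn_comp_preimage
      (Measure.measurePreserving_neg (volume : Measure ℝ)) hemb
      (f := fun t : ℝ => Real.exp (α * t)) (s := Set.Iic s)).mp h5
  have hexpVal : ∫ t in Set.Iic (0:ℝ), Real.exp (α * t) = α⁻¹ := by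
    have h1 : ∫ t in Set.Iic (0:ℝ), Real.exp (α * t)
        = ∫ x in Set.Ioi (0:ℝ), Real.exp (-(α * x)) := by
      rw [← neg_zero, ← integral_comp_neg_Iic (0:ℝ) (fun x => Real.exp (-(α * x)))]
      simp
    rw [h1]
    have h2 := integral_comp_mul_left_Ioi (fun x : ℝ => Real.exp (-x)) 0 hα
    simp only [mul_zero] at h2
    rw [h2, integral_exp_neg_Ioi_zero, smul_eq_mul, mul_one]
  intro u τ hu
  set f : ℝ → ℂ := fun t => h (u + (t : ℂ)) (τ + t / ε) with hfdef
  have hfc : ∀ (v : ℂ) (σ : ℝ), Continuous fun t : ℝ => h (v + (t : ℂ)) (σ + t / ε) := by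
    intro v σ
    exact hC1.continuous.comp
      ((continuous_const.add Complex.continuous_ofReal).prodMk
        (continuous_const.add (continuous_id.div_const ε)))
  have keyInt : ∀ s : ℝ, u.re + s < -ρ → IntegrableOn f (Set.Iic s) := by
    intro s hs
    refine Integrable.mono' (((hexpInt s).const_mul (C * Real.exp (α * u.re))))
      ((hfc u τ).aestronglyMeasurable) ?_
    filter_upwards [ae_restrict_mem measurableSet_Iic] with t ht
    have hre : (u + (t : ℂ)).re < -ρ := by
      simp only [Complex.add_re, Complex.ofReal_re]
      have : t ≤ s := ht
      linarith
    calc ‖f t‖ ≤ C * Real.exp (α * (u + (t : ℂ)).re) := hbound _ _ hre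
      _ = C * Real.exp (α * u.re) * Real.exp (α * t) := by
          simp only [Complex.add_re, Complex.ofReal_re, mul_add, Real.exp_add, mul_assoc]
  have hint0 : IntegrableOn f (Set.Iic 0) := keyInt 0 (by linarith)
  refine ⟨hint0, ?_, ?_⟩
  · -- the bound
    rw [hG]
    have hb1 : ‖∫ t in Set.Iic (0:ℝ), h (u + (t : ℂ)) (τ + t / ε)‖
        ≤ ∫ t in Set.Iic (0:ℝ), C * Real.exp (α * u.re) * Real.exp (α * t) := by
      refine norm_integral_le_of_norm_le ((hexpInt 0).const_mul (C * Real.exp (α * u.re))) ?_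
      filter_upwards [ae_restrict_mem measurableSet_Iic] with t ht
      have hre : (u + (t : ℂ)).re < -ρ := by
        simp only [Complex.add_re, Complex.ofReal_re]
        have : t ≤ (0:ℝ) := ht
        linarith
      calc ‖h (u + (t : ℂ)) (τ + t / ε)‖ ≤ C * Real.exp (α * (u + (t : ℂ)).re) :=
            hbound _ _ hre
        _ = C * Real.exp (α * u.re) * Real.exp (α * t) := by
            simp only [Complex.add_re, Complex.ofReal_re, mul_add, Real.exp_add, mul_assoc]
    refine hb1.trans ?_
    rw [integral_const_mul, hexpVal]
    exact le_of_eq (by ring)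
  · -- right inverse
    intro D hD
    set F : ℝ → ℂ := fun s => ∫ t in Set.Iic s, f t with hFdef
    have hGF : ∀ s : ℝ, G (u + (s : ℂ)) (τ + s / ε) = F s := by
      intro s
      rw [hG]
      simp only [hFdef]
      have htr := MeasurePreserving.setIntegral_preimage_emb
        (measurePreserving_add_right volume s) (measurableEmbedding_addRight s) f (Set.Iic s)
      have hpre : (fun x : ℝ => x + s) ⁻¹' Set.Iic s = Set.Iic 0 := by
        ext x; simp
      rw [hpre] at htr
      rw [← htr]
      refine setIntegral_congr_fun measurableSet_Iic fun t _ => ?_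
      show h (u + (s : ℂ) + (t : ℂ)) (τ + s / ε + t / ε) = h (u + ((t + s : ℝ) : ℂ)) (τ + (t + s) / ε)
      rw [show u + (s : ℂ) + (t : ℂ) = u + ((t + s : ℝ) : ℂ) by push_cast; ring,
        show τ + s / ε + t / ε = τ + (t + s) / ε by rw [add_div]; ring]
    have hδ : (0:ℝ) < -ρ - u.re := by linarith
    have hFeq : ∀ s ∈ Set.Iio (-ρ - u.re), F s = F 0 + ∫ t in (0:ℝ)..s, f t := by
      intro s hs
      have hs' : u.re + s < -ρ := by
        have : s < -ρ - u.re := hs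
        linarith
      have h1 := intervalIntegral.integral_Iic_sub_Iic (μ := volume) (f := f)
        hint0 (keyInt s hs')
      rw [← h1]; ring
    have hcont : Continuous f := hfc u τ
    have hderInt : HasDerivAt (fun s => F 0 + ∫ t in (0:ℝ)..s, f t) (f 0) 0 := by
      have := intervalIntegral.integral_hasDerivAt_right (f := f) (a := (0:ℝ)) (b := (0:ℝ))
        (hcont.intervalIntegrable 0 0)
        (hcont.stronglyMeasurableAtFilter _ _)
        hcont.continuousAt
      exact this.const_add (F 0)
    have hFev : F =ᶠ[nhds (0:ℝ)] fun s => F 0 + ∫ t in (0:ℝ)..s, f t := by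
      filter_upwards [Iio_mem_nhds hδ] with s hs using hFeq s hs
    have hFder : HasDerivAt F (f 0) 0 := hderInt.congr_of_eventuallyEq hFev
    -- chain rule
    have hc1 : HasDerivAt (fun s : ℝ => u + (s : ℂ)) 1 0 := by
      simpa using (Complex.ofRealCLM.hasDerivAt (x := (0:ℝ))).const_add u
    have hc2 : HasDerivAt (fun s : ℝ => τ + s / ε) ε⁻¹ 0 := by
      simpa [one_div] using ((hasDerivAt_id (0:ℝ)).div_const ε).const_add τ
    have hcurve : HasDerivAt (fun s : ℝ => ((u + (s : ℂ), τ + s / ε) : ℂ × ℝ))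
        ((1:ℂ), ε⁻¹) 0 := hc1.prodMk hc2
    have hD0 : HasFDerivAt (fun p : ℂ × ℝ => G p.1 p.2) D
        ((fun s : ℝ => ((u + (s : ℂ), τ + s / ε) : ℂ × ℝ)) 0) := by
      simpa using hD
    have hcomp := hD0.comp_hasDerivAt 0 hcurve
    have heq : (fun s : ℝ => G (u + (s : ℂ)) (τ + s / ε)) = F := funext hGF
    rw [show ((fun p : ℂ × ℝ => G p.1 p.2) ∘ fun s : ℝ => ((u + (s : ℂ), τ + s / ε) : ℂ × ℝ))
        = F from heq ▸ rfl] at hcomp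
    have := hcomp.unique hFder
    rw [this]
    simp [hfdef]
end

section
/- With G₀ as above, if w ∈ S_σ × S_σ (finite Fourier norm) then ‖G₀(w)‖_{1,σ} ≤ (K/ε)‖w‖_{1,σ} for a constant K depending only on λ; and if additionally the mean of w vanishes (w^{[0]} = 0), then ‖G₀(w)‖_{1,σ} ≤ K‖w‖_{1,σ} with K independent of ε. -/
private lemma G0_term_bound (lam ε : ℝ) (hlam : lam ≠ 0) (hε : 0 < ε) (k : ℤ) (a b : ℂ) :
    ‖-(((k : ℂ) ^ 2 + (lam : ℂ) ^ 2 * (ε : ℂ) ^ 2)⁻¹) *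
        (Complex.I * (k : ℂ) * a + (ε : ℂ) * b)‖
      + ‖-(((k : ℂ) ^ 2 + (lam : ℂ) ^ 2 * (ε : ℂ) ^ 2)⁻¹) *
        ((ε : ℂ) * (lam : ℂ) ^ 2 * a + Complex.I * (k : ℂ) * b)‖
      ≤ ((|k| : ℝ) + ε * (1 + lam ^ 2)) / ((k : ℝ) ^ 2 + lam ^ 2 * ε ^ 2)
          * (‖a‖ + ‖b‖) := by
  have hD : (0 : ℝ) < (k : ℝ) ^ 2 + lam ^ 2 * ε ^ 2 := by positivity
  have hDc : ((k : ℂ) ^ 2 + (lam : ℂ) ^ 2 * (ε : ℂ) ^ 2)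
      = (((k : ℝ) ^ 2 + lam ^ 2 * ε ^ 2 : ℝ) : ℂ) := by push_cast; ring
  set D : ℝ := (k : ℝ) ^ 2 + lam ^ 2 * ε ^ 2 with hDdef
  have habsD : ‖-(((k : ℂ) ^ 2 + (lam : ℂ) ^ 2 * (ε : ℂ) ^ 2)⁻¹)‖ = D⁻¹ := by
    rw [norm_neg, norm_inv, hDc, Complex.norm_real, Real.norm_eq_abs, abs_of_pos hD]
  have h1 : ‖Complex.I * (k : ℂ) * a + (ε : ℂ) * b‖
      ≤ (|k| : ℝ) * ‖a‖ + ε * ‖b‖ := by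
    refine (norm_add_le _ _).trans ?_
    simp [map_mul, Complex.norm_intCast, Complex.norm_real, abs_of_pos hε]
  have h2 : ‖(ε : ℂ) * (lam : ℂ) ^ 2 * a + Complex.I * (k : ℂ) * b‖
      ≤ ε * lam ^ 2 * ‖a‖ + (|k| : ℝ) * ‖b‖ := by
    refine (norm_add_le _ _).trans ?_
    simp [map_mul, map_pow, Complex.norm_intCast, Complex.norm_real, abs_of_pos hε,
      sq_abs]
  rw [norm_mul, norm_mul, habsD, div_eq_inv_mul]
  have hinv : (0 : ℝ) ≤ D⁻¹ := by positivity
  have hnn1 : (0:ℝ) ≤ ‖a‖ := norm_nonneg _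
  have hnn2 : (0:ℝ) ≤ ‖b‖ := norm_nonneg _
  have hknn : (0:ℝ) ≤ (|k| : ℝ) := by positivity
  nlinarith [mul_le_mul_of_nonneg_left h1 hinv, mul_le_mul_of_nonneg_left h2 hinv,
    mul_nonneg (mul_nonneg hinv hε.le) hnn1,
    mul_nonneg (mul_nonneg (mul_nonneg hinv hε.le) (sq_nonneg lam)) hnn2]

/-- Bounds for the operator `G₀` in the Fourier norm
`‖w‖_{1,σ} = Σ_k (|w₁^{[k]}| + |w₂^{[k]}|) e^{|k|σ}`: there is a constant `K` depending
only on `λ` such that `‖G₀(w)‖_{1,σ} ≤ (K/ε) ‖w‖_{1,σ}`, and `‖G₀(w)‖_{1,σ} ≤ K ‖w‖_{1,σ}`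
when the mean of `w` vanishes. (`ε` ranges in `(0,1]`, as in the paper.) -/
theorem G0_bounds (lam : ℝ) (hlam : lam ≠ 0) :
    ∃ K : ℝ, 0 < K ∧ ∀ ε : ℝ, 0 < ε → ε ≤ 1 → ∀ σ : ℝ, 0 ≤ σ →
      ∀ w z : ℤ → ℂ × ℂ,
      (∀ k : ℤ, z k =
        (-(((k : ℂ) ^ 2 + (lam : ℂ) ^ 2 * (ε : ℂ) ^ 2)⁻¹)) •
          (Complex.I * (k : ℂ) * (w k).1 + (ε : ℂ) * (w k).2,
           (ε : ℂ) * (lam : ℂ) ^ 2 * (w k).1 + Complex.I * (k : ℂ) * (w k).2)) →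
      (Summable fun k : ℤ =>
        (‖(w k).1‖ + ‖(w k).2‖) * Real.exp ((|k| : ℝ) * σ)) →
      (Summable fun k : ℤ =>
        (‖(z k).1‖ + ‖(z k).2‖) * Real.exp ((|k| : ℝ) * σ)) ∧
      (∑' k : ℤ, (‖(z k).1‖ + ‖(z k).2‖) * Real.exp ((|k| : ℝ) * σ))
        ≤ K / ε *
          ∑' k : ℤ, (‖(w k).1‖ + ‖(w k).2‖) * Real.exp ((|k| : ℝ) * σ) ∧
      (w 0 = 0 →
        (∑' k : ℤ, (‖(z k).1‖ + ‖(z k).2‖) * Real.exp ((|k| : ℝ) * σ))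
          ≤ K *
            ∑' k : ℤ, (‖(w k).1‖ + ‖(w k).2‖) *
              Real.exp ((|k| : ℝ) * σ)) := by
  have hlam2 : (0:ℝ) < lam ^ 2 := by positivity
  refine ⟨2 + lam ^ 2 + (1 + lam ^ 2) / lam ^ 2, by positivity, ?_⟩
  set K : ℝ := 2 + lam ^ 2 + (1 + lam ^ 2) / lam ^ 2 with hKdef
  have hK : 0 < K := by positivity
  have hK2 : 2 + lam ^ 2 ≤ K := by
    have h : 0 ≤ (1 + lam ^ 2) / lam ^ 2 := by positivity
    rw [hKdef]; linarith
  intro ε hε hε1 σ hσ w z hz hw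
  -- pointwise coefficient
  set c : ℤ → ℝ := fun k => ((|k| : ℝ) + ε * (1 + lam ^ 2)) / ((k : ℝ) ^ 2 + lam ^ 2 * ε ^ 2)
    with hcdef
  have hD : ∀ k : ℤ, (0 : ℝ) < (k : ℝ) ^ 2 + lam ^ 2 * ε ^ 2 := fun k => by positivity
  have hcKε : ∀ k : ℤ, c k ≤ K / ε := by
    intro k
    rcases eq_or_ne k 0 with rfl | hk
    · simp only [hcdef]
      rw [div_le_div_iff₀ (hD 0) hε]
      push_cast
      rw [abs_zero]
      have h : (1 + lam ^ 2) ≤ K * lam ^ 2 := by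
        rw [hKdef]; field_simp; nlinarith
      have := mul_le_mul_of_nonneg_right h (sq_nonneg ε)
      nlinarith [sq_nonneg ε, hε.le]
    · have h1 : (1:ℝ) ≤ (|k| : ℝ) := by exact_mod_cast Int.one_le_abs hk
      have h2 : (|k| : ℝ) ≤ (k : ℝ) ^ 2 := by
        have : ((|k| : ℝ)) ^ 2 = (k:ℝ) ^ 2 := by push_cast [sq_abs]; ring
        nlinarith
      have hcK : c k ≤ K := by
        rw [hcdef]
        simp only
        rw [div_le_iff₀ (hD k)]
        nlinarith [mul_nonneg hε.le (sq_nonneg lam), sq_nonneg ((k:ℝ)*ε), sq_nonneg (lam*ε)]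
      calc c k ≤ K := hcK
        _ ≤ K / ε := by
            rw [le_div_iff₀ hε]; nlinarith
  have hcK' : ∀ k : ℤ, k ≠ 0 → c k ≤ K := by
    intro k hk
    have h1 : (1:ℝ) ≤ (|k| : ℝ) := by exact_mod_cast Int.one_le_abs hk
    have h2 : (|k| : ℝ) ≤ (k : ℝ) ^ 2 := by
      have : ((|k| : ℝ)) ^ 2 = (k:ℝ) ^ 2 := by push_cast [sq_abs]; ring
      nlinarith
    rw [hcdef]
    simp only
    rw [div_le_iff₀ (hD k)]
    nlinarith [mul_nonneg hε.le (sq_nonneg lam), sq_nonneg ((k:ℝ)*ε), sq_nonneg (lam*ε)]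
  set g : ℤ → ℝ := fun k => (‖(w k).1‖ + ‖(w k).2‖)
      * Real.exp ((|k| : ℝ) * σ) with hgdef
  set f : ℤ → ℝ := fun k => (‖(z k).1‖ + ‖(z k).2‖)
      * Real.exp ((|k| : ℝ) * σ) with hfdef
  have hgnn : ∀ k, 0 ≤ g k := fun k => by
    have := norm_nonneg (w k).1
    have := norm_nonneg (w k).2
    positivity
  have hfc : ∀ k, f k ≤ c k * g k := by
    intro k
    have hb := G0_term_bound lam ε hlam hε k (w k).1 (w k).2
    have hz1 : (z k).1 = (-(((k : ℂ) ^ 2 + (lam : ℂ) ^ 2 * (ε : ℂ) ^ 2)⁻¹)) *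
        (Complex.I * (k : ℂ) * (w k).1 + (ε : ℂ) * (w k).2) := by rw [hz k]; rfl
    have hz2 : (z k).2 = (-(((k : ℂ) ^ 2 + (lam : ℂ) ^ 2 * (ε : ℂ) ^ 2)⁻¹)) *
        ((ε : ℂ) * (lam : ℂ) ^ 2 * (w k).1 + Complex.I * (k : ℂ) * (w k).2) := by
      rw [hz k]; rfl
    have he : (0:ℝ) < Real.exp ((|k| : ℝ) * σ) := Real.exp_pos _
    simp only [hfdef, hgdef, hz1, hz2]
    calc (‖_‖ + ‖_‖) * Real.exp ((|k| : ℝ) * σ)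
        ≤ (c k * (‖(w k).1‖ + ‖(w k).2‖)) * Real.exp ((|k| : ℝ) * σ) :=
          mul_le_mul_of_nonneg_right hb he.le
      _ = c k * ((‖(w k).1‖ + ‖(w k).2‖) * Real.exp ((|k| : ℝ) * σ)) := by
          ring
  have hfKε : ∀ k, f k ≤ K / ε * g k := fun k =>
    (hfc k).trans (mul_le_mul_of_nonneg_right (hcKε k) (hgnn k))
  have hfnn : ∀ k, 0 ≤ f k := fun k => by
    have := norm_nonneg (z k).1
    have := norm_nonneg (z k).2
    have := (Real.exp_pos ((|k| : ℝ) * σ)).le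
    positivity
  have hsum2 : Summable (fun k => K / ε * g k) := hw.mul_left _
  have hsumf : Summable f := Summable.of_nonneg_of_le hfnn hfKε hsum2
  refine ⟨hsumf, ?_, ?_⟩
  · calc ∑' k, f k ≤ ∑' k, K / ε * g k := Summable.tsum_le_tsum hfKε hsumf hsum2
      _ = K / ε * ∑' k, g k := tsum_mul_left
  · intro hw0
    have hfK : ∀ k, f k ≤ K * g k := by
      intro k
      rcases eq_or_ne k 0 with rfl | hk
      · have hg0 : g 0 = 0 := by simp [hgdef, hw0]
        have := hfc 0
        rw [hg0] at this ⊢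
        simpa using this
      · exact (hfc k).trans (mul_le_mul_of_nonneg_right (hcK' k hk) (hgnn k))
    calc ∑' k, f k ≤ ∑' k, K * g k := Summable.tsum_le_tsum hfK hsumf (hw.mul_left _)
      _ = K * ∑' k, g k := tsum_mul_left
end
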